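/- arXiv:2507.17341 — 4 statements merged into one kernel-verified Lean document; each statement's English description precedes it below -/
import Mathlib

section
/- Let ℓ ≥ 1 be an integer and let G_ℓ be the graph described in the context. Then every total dominating set D of G_ℓ contains, for each i ∈ {1,…,ℓ}, at least two vertices of the 4-cycle C_i = {(i,1),(i,2),(i,3),(i,4)}. -/
/-- The edge relation of the graph `G_ℓ`: vertex `(i,j)` (0-indexed: `j : Fin 4`
corresponds to `j+1` in the paper) with 4-cycle edges in each block and the
path edges `(i,2)(i+1,2)` (0-indexed second coordinate `1`). -/
def cycleRel (l : ℕ) (p q : Fin l × Fin 4) : Prop :=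
  (p.1 = q.1 ∧ ((p.2.val = 0 ∧ q.2.val = 1) ∨ (p.2.val = 0 ∧ q.2.val = 2) ∨
     (p.2.val = 1 ∧ q.2.val = 3) ∨ (p.2.val = 2 ∧ q.2.val = 3))) ∨
  (q.1.val = p.1.val + 1 ∧ p.2.val = 1 ∧ q.2.val = 1)

/-- The graph `G_ℓ`. -/
def Gl (l : ℕ) : SimpleGraph (Fin l × Fin 4) := SimpleGraph.fromRel (cycleRel l)

/-- `D` is a total dominating set of `G`. -/
def IsTotalDomSet {V : Type*} (G : SimpleGraph V) (D : Finset V) : Prop :=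
  ∀ v : V, ∃ d ∈ D, G.Adj v d

/-- Every total dominating set of `G_ℓ` contains at least two vertices of each
4-cycle `C_i`. -/
theorem stmt0 (l : ℕ) (hl : 1 ≤ l) (D : Finset (Fin l × Fin 4))
    (hD : IsTotalDomSet (Gl l) D) :
    ∀ i : Fin l, 2 ≤ (D.filter (fun p => p.1 = i)).card := by
  intro i
  obtain ⟨d1, hd1D, hd1⟩ := hD (i, ⟨0, by norm_num⟩)
  obtain ⟨d2, hd2D, hd2⟩ := hD (i, ⟨2, by norm_num⟩)
  simp only [Gl, SimpleGraph.fromRel_adj, cycleRel] at hd1 hd2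
  have h1 : d1.1 = i ∧ (d1.2.val = 1 ∨ d1.2.val = 2) := by
    obtain ⟨-, h⟩ := hd1
    rcases h with (⟨h, h'⟩ | h) | (⟨h, h'⟩ | h)
    · exact ⟨h.symm, by omega⟩
    · omega
    · exact ⟨h, by omega⟩
    · omega
  have h2 : d2.1 = i ∧ (d2.2.val = 0 ∨ d2.2.val = 3) := by
    obtain ⟨-, h⟩ := hd2
    rcases h with (⟨h, h'⟩ | h) | (⟨h, h'⟩ | h)
    · exact ⟨h.symm, by omega⟩
    · omega
    · exact ⟨h, by omega⟩
    · omega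
  have hne : d1 ≠ d2 := by
    intro h; rw [h] at h1; omega
  have hsub : ({d1, d2} : Finset (Fin l × Fin 4)) ⊆ D.filter (fun p => p.1 = i) := by
    intro x hx
    simp only [Finset.mem_insert, Finset.mem_singleton] at hx
    rcases hx with rfl | rfl <;> simp [Finset.mem_filter, hd1D, hd2D, h1.1, h2.1]
  calc 2 = ({d1, d2} : Finset (Fin l × Fin 4)).card := (Finset.card_pair hne).symm
    _ ≤ _ := Finset.card_le_card hsub
end

section
/- Let ℓ ≥ 1 be an integer and let G_ℓ be the graph described in the context. Then the total domination number of G_ℓ equals 2ℓ, i.e. γ_t(G_ℓ) = 2ℓ. -/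
lemma gl_adj {l : ℕ} {p q : Fin l × Fin 4} :
    (Gl l).Adj p q ↔ p ≠ q ∧ (cycleRel l p q ∨ cycleRel l q p) := by
  rw [Gl, SimpleGraph.fromRel_adj]

lemma adj_two {l : ℕ} {i : Fin l} {v : Fin l × Fin 4}
    (h : (Gl l).Adj (i, 2) v) : v.1 = i ∧ (v.2.val = 0 ∨ v.2.val = 3) := by
  rw [gl_adj] at h
  obtain ⟨hne, h | h⟩ := h <;> simp [cycleRel] at h
  · exact ⟨h.1.symm, Or.inr h.2⟩
  · exact ⟨h.1, Or.inl (by simp [h.2])⟩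

lemma adj_zero {l : ℕ} {i : Fin l} {v : Fin l × Fin 4}
    (h : (Gl l).Adj (i, 0) v) : v.1 = i ∧ (v.2.val = 1 ∨ v.2.val = 2) := by
  rw [gl_adj] at h
  obtain ⟨hne, h | h⟩ := h <;> simp [cycleRel] at h
  exact ⟨h.1.symm, h.2⟩

lemma upper (l : ℕ) :
    IsTotalDomSet (Gl l) ((Finset.univ : Finset (Fin l)) ×ˢ ({0, 1} : Finset (Fin 4))) ∧
    ((Finset.univ : Finset (Fin l)) ×ˢ ({0, 1} : Finset (Fin 4))).card = 2 * l := by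
  constructor
  · rintro ⟨i, j⟩
    fin_cases j
    · exact ⟨(i, 1), by simp, gl_adj.mpr ⟨by simp, Or.inl (by simp [cycleRel])⟩⟩
    · exact ⟨(i, 0), by simp, gl_adj.mpr ⟨by simp, Or.inr (by simp [cycleRel])⟩⟩
    · exact ⟨(i, 0), by simp, gl_adj.mpr ⟨by simp, Or.inr (by simp [cycleRel])⟩⟩
    · exact ⟨(i, 1), by simp, gl_adj.mpr ⟨by simp, Or.inr (by simp [cycleRel])⟩⟩
  · rw [Finset.card_product]
    simp [mul_comm]

lemma lower {l : ℕ} {D : Finset (Fin l × Fin 4)} (hD : IsTotalDomSet (Gl l) D) :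
    2 * l ≤ D.card := by
  have key : ∀ i : Fin l, 2 ≤ (D.filter (fun p => p.1 = i)).card := by
    intro i
    obtain ⟨d, hdD, hadj⟩ := hD (i, 2)
    obtain ⟨d', hd'D, hadj'⟩ := hD (i, 0)
    have h1 := adj_two hadj
    have h2 := adj_zero hadj'
    have hne : d ≠ d' := by
      intro h; rw [h] at h1; omega
    refine Finset.one_lt_card.mpr ⟨d, ?_, d', ?_, hne⟩ <;>
      simp [Finset.mem_filter, hdD, hd'D, h1.1, h2.1]
  have hsum : D.card = ∑ i : Fin l, (D.filter (fun p => p.1 = i)).card :=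
    Finset.card_eq_sum_card_fiberwise (fun x _ => Finset.mem_univ x.1)
  calc 2 * l = ∑ _i : Fin l, 2 := by simp [mul_comm]
    _ ≤ ∑ i : Fin l, (D.filter (fun p => p.1 = i)).card :=
        Finset.sum_le_sum (fun i _ => key i)
    _ = D.card := hsum.symm

/-- The total domination number of `G_ℓ` equals `2ℓ`. -/
theorem stmt1 (l : ℕ) (hl : 1 ≤ l) :
    sInf {n : ℕ | ∃ D : Finset (Fin l × Fin 4),
      IsTotalDomSet (Gl l) D ∧ D.card = n} = 2 * l := by
  have hmem : 2 * l ∈ {n : ℕ | ∃ D : Finset (Fin l × Fin 4),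
      IsTotalDomSet (Gl l) D ∧ D.card = n} :=
    ⟨_, (upper l).1, (upper l).2⟩
  refine le_antisymm (Nat.sInf_le hmem) (le_csInf ⟨_, hmem⟩ ?_)
  rintro n ⟨D, hD, rfl⟩
  exact lower hD
end

section
/- Let k ≥ 2 and n ≥ 4 be integers and let G_{k,n} be the graph described in the context. Then the domination number and the total domination number of G_{k,n} both equal k, i.e. γ(G_{k,n}) = γ_t(G_{k,n}) = k. -/
/-- Vertices of `G_{k,n}`: the clique vertices `y_j` (`Sum.inl`), the vertices
`z_{i,j}` (`Sum.inr (Sum.inl (i,j))`, 0-indexed), and the vertex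
`u = Sum.inr (Sum.inr ())`. -/
abbrev GknV (k n : ℕ) := Fin n ⊕ ((Fin (k - 1) × Fin n) ⊕ Unit)

/-- Edge relation of `G_{k,n}`: the `y`'s form a `K_n`; for each `i` the
`z_{i,·}`'s form a `K_n` minus the edge `z_{i,1} z_{i,2}` (0-indexed: second
coordinates `0` and `1`); `u` is adjacent to every `y_j` and to `z_{i,1}`,
`z_{i,2}` for every `i`. -/
def GknRel (k n : ℕ) : GknV k n → GknV k n → Prop
  | .inl _, .inl _ => True
  | .inr (.inl p), .inr (.inl q) =>
      p.1 = q.1 ∧ ¬((p.2.val = 0 ∧ q.2.val = 1) ∨ (p.2.val = 1 ∧ q.2.val = 0))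
  | .inr (.inr _), .inl _ => True
  | .inr (.inr _), .inr (.inl p) => p.2.val = 0 ∨ p.2.val = 1
  | _, _ => False

/-- The graph `G_{k,n}`. -/
def Gkn (k n : ℕ) : SimpleGraph (GknV k n) := SimpleGraph.fromRel (GknRel k n)

/-- `D` is a dominating set of `G`. -/
def IsDomSet {V : Type*} (G : SimpleGraph V) (D : Finset V) : Prop :=
  ∀ v : V, v ∉ D → ∃ d ∈ D, G.Adj v d

lemma gkn_adj {k n : ℕ} {a b : GknV k n} :
    (Gkn k n).Adj a b ↔ a ≠ b ∧ (GknRel k n a b ∨ GknRel k n b a) :=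
  SimpleGraph.fromRel_adj _ _ _

/-- block function -/
def blk {k n : ℕ} : GknV k n → Fin (k - 1) ⊕ Unit
  | .inl _ => .inr ()
  | .inr (.inl p) => .inl p.1
  | .inr (.inr _) => .inr ()

lemma lower_s3 {k n : ℕ} (hk : 2 ≤ k) (hn : 4 ≤ n) (D : Finset (GknV k n))
    (hD : IsDomSet (Gkn k n) D) : k ≤ D.card := by
  classical
  have key : ∀ b : Fin (k - 1) ⊕ Unit, ∃ d ∈ D, blk d = b := by
    rintro (i | _)
    · by_cases h : (Sum.inr (Sum.inl (i, ⟨3, by omega⟩)) : GknV k n) ∈ D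
      · exact ⟨_, h, rfl⟩
      · obtain ⟨d, hd, hadj⟩ := hD _ h
        refine ⟨d, hd, ?_⟩
        rw [gkn_adj] at hadj
        obtain ⟨-, hr | hr⟩ := hadj
        · match d, hr with
          | .inr (.inl q), ⟨h1, _⟩ => simp [blk, ← h1]
        · match d, hr with
          | .inr (.inl q), ⟨h1, _⟩ => simp [blk, h1]
          | .inr (.inr _), hr => exact absurd hr (by simp [GknRel])
    · by_cases h : (Sum.inl ⟨0, by omega⟩ : GknV k n) ∈ D
      · exact ⟨_, h, rfl⟩
      · obtain ⟨d, hd, hadj⟩ := hD _ h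
        refine ⟨d, hd, ?_⟩
        rw [gkn_adj] at hadj
        obtain ⟨-, hr | hr⟩ := hadj
        · match d, hr with
          | .inl _, _ => rfl
        · match d, hr with
          | .inl _, _ => rfl
          | .inr (.inr _), _ => rfl
  choose g hgD hgb using key
  have hcard : (Finset.univ : Finset (Fin (k - 1) ⊕ Unit)).card ≤ D.card := by
    apply Finset.card_le_card_of_injOn g (fun b _ => hgD b)
    intro a _ b _ hab
    rw [← hgb a, ← hgb b, hab]
  simpa [Finset.card_univ, Nat.sub_add_cancel (by omega : 1 ≤ k)] using hcard

lemma upper_s3 {k n : ℕ} (hk : 2 ≤ k) (hn : 4 ≤ n) :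
    ∃ D : Finset (GknV k n), IsTotalDomSet (Gkn k n) D ∧ D.card = k := by
  classical
  refine ⟨insert (Sum.inr (Sum.inr ()))
      (Finset.univ.image fun i : Fin (k - 1) =>
        (Sum.inr (Sum.inl (i, ⟨0, by omega⟩)) : GknV k n)), ?_, ?_⟩
  · rintro (j | p | _)
    · -- y_j: dominated by u
      refine ⟨Sum.inr (Sum.inr ()), Finset.mem_insert_self _ _, ?_⟩
      rw [gkn_adj]
      exact ⟨by simp, Or.inr trivial⟩
    · -- z_{p.1, p.2}
      by_cases h : p.2.val = 0 ∨ p.2.val = 1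
      · refine ⟨Sum.inr (Sum.inr ()), Finset.mem_insert_self _ _, ?_⟩
        rw [gkn_adj]
        exact ⟨by simp, Or.inr h⟩
      · refine ⟨Sum.inr (Sum.inl (p.1, ⟨0, by omega⟩)), ?_, ?_⟩
        · exact Finset.mem_insert_of_mem (Finset.mem_image_of_mem _ (Finset.mem_univ _))
        · rw [gkn_adj]
          push_neg at h
          constructor
          · intro hc
            simp only [Sum.inr.injEq, Sum.inl.injEq] at hc
            exact h.1 (by rw [congrArg Prod.snd hc])
          · exact Or.inl ⟨rfl, by simp; omega⟩
    · -- u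
      refine ⟨Sum.inr (Sum.inl (⟨0, by omega⟩, ⟨0, by omega⟩)), ?_, ?_⟩
      · exact Finset.mem_insert_of_mem (Finset.mem_image_of_mem _ (Finset.mem_univ _))
      · rw [gkn_adj]
        exact ⟨by simp, Or.inl (Or.inl rfl)⟩
  · rw [Finset.card_insert_of_notMem (by simp), Finset.card_image_of_injective _
      (fun a b hab => by simpa using hab), Finset.card_univ]
    simp; omega

/-- The domination number and total domination number of `G_{k,n}` both
equal `k`. -/
theorem stmt3 (k n : ℕ) (hk : 2 ≤ k) (hn : 4 ≤ n) :
    sInf {m : ℕ | ∃ D : Finset (GknV k n), IsDomSet (Gkn k n) D ∧ D.card = m} = k ∧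
    sInf {m : ℕ | ∃ D : Finset (GknV k n), IsTotalDomSet (Gkn k n) D ∧ D.card = m} = k := by
  obtain ⟨D, hDt, hDc⟩ := upper_s3 (k := k) (n := n) hk hn
  have hDd : IsDomSet (Gkn k n) D := fun v _ => hDt v
  constructor
  · apply le_antisymm
    · exact Nat.sInf_le ⟨D, hDd, hDc⟩
    · refine le_csInf ⟨k, D, hDd, hDc⟩ ?_
      rintro m ⟨E, hE, rfl⟩
      exact lower_s3 hk hn E hE
  · apply le_antisymm
    · exact Nat.sInf_le ⟨D, hDt, hDc⟩
    · refine le_csInf ⟨k, D, hDt, hDc⟩ ?_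
      rintro m ⟨E, hE, rfl⟩
      exact lower_s3 hk hn E (fun v _ => hE v)
end

section
/- Let k ≥ 2 and n ≥ 4 be integers and let G_{k,n} be the graph described in the context. Then for every choice of vertices x_i ∈ {z_{i,1}, z_{i,2}} for i = 1,…,k−1, the set {u, x_1,…,x_{k−1}} is a total dominating set of G_{k,n}. -/
/-- For every choice `x_i ∈ {z_{i,1}, z_{i,2}}`, the set `{u, x_1, …, x_{k-1}}`
is a total dominating set of `G_{k,n}`. -/
theorem stmt4 (k n : ℕ) (hk : 2 ≤ k) (hn : 4 ≤ n)
    (c : Fin (k - 1) → Fin n) (hc : ∀ i, (c i).val = 0 ∨ (c i).val = 1) :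
    IsTotalDomSet (Gkn k n)
      (insert (Sum.inr (Sum.inr ()))
        (Finset.image (fun i => Sum.inr (Sum.inl (i, c i))) Finset.univ)) := by
  intro v
  match v with
  | .inl j =>
    refine ⟨.inr (.inr ()), Finset.mem_insert_self _ _, ?_⟩
    rw [Gkn, SimpleGraph.fromRel_adj]
    exact ⟨by simp, Or.inr trivial⟩
  | .inr (.inr _) =>
    have hk1 : 0 < k - 1 := by omega
    refine ⟨.inr (.inl (⟨0, hk1⟩, c ⟨0, hk1⟩)),
      Finset.mem_insert_of_mem (Finset.mem_image_of_mem _ (Finset.mem_univ _)), ?_⟩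
    rw [Gkn, SimpleGraph.fromRel_adj]
    exact ⟨by simp, Or.inl (hc _)⟩
  | .inr (.inl (i, j)) =>
    by_cases h : j.val = 0 ∨ j.val = 1
    · refine ⟨.inr (.inr ()), Finset.mem_insert_self _ _, ?_⟩
      rw [Gkn, SimpleGraph.fromRel_adj]
      exact ⟨by simp, Or.inr h⟩
    · refine ⟨.inr (.inl (i, c i)),
        Finset.mem_insert_of_mem (Finset.mem_image_of_mem _ (Finset.mem_univ _)), ?_⟩
      rw [Gkn, SimpleGraph.fromRel_adj]
      have hne : (Sum.inr (Sum.inl (i, j)) : GknV k n) ≠ Sum.inr (Sum.inl (i, c i)) := by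
        intro he
        have : j = c i := by simpa using he
        rcases hc i with h0|h0 <;> (rw [this] at h; omega)
      refine ⟨hne, Or.inl ⟨rfl, ?_⟩⟩
      show ¬((j.val = 0 ∧ (c i).val = 1) ∨ (j.val = 1 ∧ (c i).val = 0))
      omega
end
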